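/- For the swap network F on n automata (n even, f_i(x) = x_{i+n/2} for i < n/2, f_i(x) = x_{i-n/2} for i ≥ n/2) with sequential schedule W = ({0},...,{n-1}), the chromatic number of G_NECC(F,W) is at least 2^{n/2}, hence κ(F,W) ≥ n/2. -/

import Mathlib

/-- A configuration of a Boolean automata network of size `n`. -/
abbrev Conf (n : ℕ) := Fin n → Bool

/-- `F_I`: update simultaneously exactly the automata in `I`. -/
def updSet {n : ℕ} (F : Conf n → Conf n) (I : Finset (Fin n)) (x : Conf n) : Conf n :=
  fun i => if i ∈ I then F x i else x i

/-- `W_{<j}`: union of the first `j` blocks of the schedule `W`. -/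
def prefUnion {n : ℕ} (W : List (Finset (Fin n))) (j : ℕ) : Finset (Fin n) :=
  (W.take j).foldr (· ∪ ·) ∅

/-- `W` is a block-sequential update schedule: an ordered partition of the automata. -/
def isSchedule {n : ℕ} (W : List (Finset (Fin n))) : Prop :=
  (∀ B ∈ W, B.Nonempty) ∧ W.Pairwise Disjoint ∧ W.foldr (· ∪ ·) ∅ = Finset.univ

/-- Confusable configurations: identical after updating the first `i` blocks, some `i ∈ [0,p]`. -/
def confusable {n : ℕ} (F : Conf n → Conf n) (W : List (Finset (Fin n))) (x x' : Conf n) : Prop :=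
  ∃ i ≤ W.length, updSet F (prefUnion W i) x = updSet F (prefUnion W i) x'

/-- `CC(x,x')`: the set of steps making `x` and `x'` confusable. -/
def CCset {n : ℕ} (F : Conf n → Conf n) (W : List (Finset (Fin n))) (x x' : Conf n) : Set ℕ :=
  {i | i ≤ W.length ∧ updSet F (prefUnion W i) x = updSet F (prefUnion W i) x'}

/-- The `G_NECC` graph: edges between non-equivalent confusable configurations. -/
def gnecc {n : ℕ} (F : Conf n → Conf n) (W : List (Finset (Fin n))) :
    SimpleGraph (Conf n) where
  Adj x x' := F x ≠ F x' ∧ confusable F W x x'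
  symm := ⟨by
    rintro x x' ⟨hne, i, hi, h⟩
    exact ⟨hne.symm, i, hi, h.symm⟩⟩
  loopless := ⟨by rintro x ⟨hne, _⟩; exact hne rfl⟩

/-- `F^W`: apply the blocks of `W` sequentially. -/
def runSched {n : ℕ} (F : Conf n → Conf n) (W : List (Finset (Fin n))) (x : Conf n) : Conf n :=
  W.foldl (fun y B => updSet F B y) x

/-- `W(i)`: the index of the block of `W` containing `i`. -/
def stepOf {n : ℕ} (W : List (Finset (Fin n))) (i : Fin n) : ℕ :=
  W.findIdx (fun B => decide (i ∈ B))

/-- `W' ∈ E_h(W,V')`: `W'` extends `W`, preserving the update order via `h`. -/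
def extendsSched {n m : ℕ} (W : List (Finset (Fin n))) (W' : List (Finset (Fin m)))
    (h : Fin n → Fin m) : Prop :=
  ∀ i i' : Fin n, (stepOf W i ≤ stepOf W i' ↔ stepOf W' (h i) ≤ stepOf W' (h i'))

/-- `(F',W')` `h`-simulates `(F,[V])`: `φ_h ∘ F'^{W'} = F ∘ φ_h`. -/
def simulates {n m : ℕ} (F' : Conf m → Conf m) (W' : List (Finset (Fin m)))
    (F : Conf n → Conf n) (h : Fin n → Fin m) : Prop :=
  ∀ z : Conf m, (fun i => runSched F' W' z (h i)) = F (fun i => z (h i))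

/-- `κ(F,W)`: minimal number of additional automata needed to simulate `(F,[V])`
with a schedule extending `W` order-preservingly. -/
noncomputable def kappa {n : ℕ} (F : Conf n → Conf n) (W : List (Finset (Fin n))) : ℕ :=
  sInf {k | ∃ h : Fin n → Fin (n + k), Function.Injective h ∧
    ∃ W' : List (Finset (Fin (n + k))), isSchedule W' ∧ extendsSched W W' h ∧
      ∃ F' : Conf (n + k) → Conf (n + k), simulates F' W' F h}

/-- The simple sequential update schedule `({0},{1},…,{n-1})`. -/
def seqSched (n : ℕ) : List (Finset (Fin n)) := (List.finRange n).map (fun i => {i})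

/-- The swap network: automata `i` and `i + n/2` exchange their values. -/
def swapF (n : ℕ) (hn : Even n) : Conf n → Conf n :=
  fun x i =>
    if h : (i : ℕ) < n / 2 then
      x ⟨(i : ℕ) + n / 2, by have h2 := Nat.even_iff.mp hn; omega⟩
    else
      x ⟨(i : ℕ) - n / 2, by have := i.isLt; omega⟩

/-! ### Auxiliary machinery -/

section Aux

variable {m : ℕ}

lemma mem_foldr_union (L : List (Finset (Fin m))) (v : Fin m) :
    v ∈ L.foldr (· ∪ ·) ∅ ↔ ∃ B ∈ L, v ∈ B := by
  induction L with
  | nil => simp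
  | cons B L ih => simp [ih]

/-- Partial run: apply the first `s` blocks of `W`. -/
def pRun (F : Conf m → Conf m) (W : List (Finset (Fin m))) (s : ℕ) (z : Conf m) : Conf m :=
  (W.take s).foldl (fun y B => updSet F B y) z

lemma pRun_zero (F : Conf m → Conf m) (W : List (Finset (Fin m))) (z : Conf m) :
    pRun F W 0 z = z := rfl

lemma pRun_succ_of_lt (F : Conf m → Conf m) {W : List (Finset (Fin m))} {s : ℕ}
    (hs : s < W.length) (z : Conf m) :
    pRun F W (s + 1) z = updSet F W[s] (pRun F W s z) := by
  have h1 : W.take (s + 1) = W.take s ++ [W[s]] := by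
    rw [List.take_succ, List.getElem?_eq_getElem hs]; rfl
  unfold pRun
  rw [h1, List.foldl_append]
  rfl

lemma pRun_succ_of_ge (F : Conf m → Conf m) {W : List (Finset (Fin m))} {s : ℕ}
    (hs : W.length ≤ s) (z : Conf m) :
    pRun F W (s + 1) z = pRun F W s z := by
  unfold pRun
  rw [List.take_of_length_le (by omega), List.take_of_length_le hs]

lemma runSched_eq_pRun (F : Conf m → Conf m) (W : List (Finset (Fin m))) (z : Conf m) :
    runSched F W z = pRun F W W.length z := by
  unfold runSched pRun
  rw [List.take_length]

lemma runSched_eq_of_pRun_eq (F : Conf m → Conf m) (W : List (Finset (Fin m))) {T : ℕ}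
    {z z' : Conf m} (hz : pRun F W T z = pRun F W T z') :
    runSched F W z = runSched F W z' := by
  unfold runSched
  rw [← List.take_append_drop T W, List.foldl_append, List.foldl_append]
  show ((W.drop T).foldl _ (pRun F W T z)) = ((W.drop T).foldl _ (pRun F W T z'))
  rw [hz]

lemma pRun_stable (F : Conf m → Conf m) {W : List (Finset (Fin m))} {v : Fin m} {a b : ℕ}
    (hv : ∀ j (hj : j < W.length), a ≤ j → j < b → v ∉ W[j]) :
    ∀ s, a ≤ s → s ≤ b → ∀ z, pRun F W s z v = pRun F W a z v := by
  intro s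
  induction s with
  | zero =>
      intro h _ z
      have ha : a = 0 := by omega
      subst ha; rfl
  | succ s ih =>
      intro ha hb z
      rcases Nat.eq_or_lt_of_le ha with h | h
      · rw [← h]
      · have ha' : a ≤ s := by omega
        rcases Nat.lt_or_ge s W.length with hs | hs
        · rw [pRun_succ_of_lt F hs]
          have hnot : v ∉ W[s] := hv s hs ha' (by omega)
          show (if v ∈ W[s] then _ else _) = _
          rw [if_neg hnot]
          exact ih ha' (by omega) z
        · rw [pRun_succ_of_ge F hs]
          exact ih ha' (by omega) z

lemma pRun_eq_self (F : Conf m → Conf m) {W : List (Finset (Fin m))} {v : Fin m} {s : ℕ}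
    (hv : ∀ j (hj : j < W.length), j < s → v ∉ W[j]) (z : Conf m) :
    pRun F W s z v = z v := by
  have := pRun_stable F (a := 0) (b := s) (v := v)
    (fun j hj _ hjs => hv j hj hjs) s (Nat.zero_le _) le_rfl z
  simpa [pRun_zero] using this

lemma runSched_at (F : Conf m → Conf m) {W : List (Finset (Fin m))} {v : Fin m} {t : ℕ}
    (ht : t < W.length) (hmem : v ∈ W[t])
    (hafter : ∀ j (hj : j < W.length), t < j → v ∉ W[j]) (z : Conf m) :
    runSched F W z v = F (pRun F W t z) v := by
  rw [runSched_eq_pRun]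
  have hstable := pRun_stable F (a := t + 1) (b := W.length) (v := v)
    (fun j hj hle _ => hafter j hj (by omega)) W.length (by omega) le_rfl z
  rw [hstable, pRun_succ_of_lt F ht]
  show (if v ∈ W[t] then _ else _) = _
  rw [if_pos hmem]

lemma pRun_frozen (F : Conf m → Conf m) {W : List (Finset (Fin m))} {v : Fin m} {t s : ℕ}
    (hs : t < s) (hsl : s ≤ W.length)
    (hafter : ∀ j (hj : j < W.length), t < j → v ∉ W[j]) (z : Conf m) :
    pRun F W s z v = runSched F W z v := by
  rw [runSched_eq_pRun]
  have h1 := pRun_stable F (a := t + 1) (b := W.length) (v := v)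
    (fun j hj hle _ => hafter j hj (by omega)) s (by omega) hsl z
  have h2 := pRun_stable F (a := t + 1) (b := W.length) (v := v)
    (fun j hj hle _ => hafter j hj (by omega)) W.length (by omega) le_rfl z
  rw [h1, h2]

/-! ### Schedule facts -/

lemma stepOf_lt_length {W : List (Finset (Fin m))} (hW : isSchedule W) (v : Fin m) :
    stepOf W v < W.length := by
  apply List.findIdx_lt_length_of_exists
  have hv : v ∈ W.foldr (· ∪ ·) ∅ := by rw [hW.2.2]; exact Finset.mem_univ v
  obtain ⟨B, hB, hvB⟩ := (mem_foldr_union W v).mp hv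
  exact ⟨B, hB, by simpa⟩

lemma mem_stepOf {W : List (Finset (Fin m))} (hW : isSchedule W) (v : Fin m) :
    v ∈ W[stepOf W v]'(stepOf_lt_length hW v) := by
  have := List.findIdx_getElem (p := fun B => decide (v ∈ B)) (xs := W)
    (w := stepOf_lt_length hW v)
  exact of_decide_eq_true this

lemma not_mem_of_ne_stepOf {W : List (Finset (Fin m))} (hW : isSchedule W) (v : Fin m)
    {j : ℕ} (hj : j < W.length) (hne : j ≠ stepOf W v) : v ∉ W[j] := by
  rcases Nat.lt_or_ge j (stepOf W v) with h | h
  · have := List.not_of_lt_findIdx (p := fun B => decide (v ∈ B)) (xs := W) h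
    simpa using this
  · have h' : stepOf W v < j := by omega
    have hlt := stepOf_lt_length hW v
    have hd := List.pairwise_iff_getElem.mp hW.2.1 (stepOf W v) j hlt hj h'
    intro hmem'
    exact (Finset.disjoint_left.mp hd (mem_stepOf hW v)) hmem'

end Aux

/-! ### The sequential schedule -/

lemma seqSched_length (n : ℕ) : (seqSched n).length = n := by simp [seqSched]

lemma seqSched_getElem (n : ℕ) {j : ℕ} (hj : j < (seqSched n).length) :
    (seqSched n)[j] = {(⟨j, by simpa [seqSched_length] using hj⟩ : Fin n)} := by
  simp [seqSched]

lemma findIdx_singleton_map {n m : ℕ} (g : Fin n → Fin m) (hg : Function.Injective g)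
    (i : Fin n) :
    List.findIdx (fun B => decide (g i ∈ B))
      ((List.finRange n).map (fun j => ({g j} : Finset (Fin m)))) = (i : ℕ) := by
  set L := (List.finRange n).map (fun j => ({g j} : Finset (Fin m))) with hL
  have hlen : L.length = n := by simp [hL]
  have hgetElem : ∀ (j : ℕ) (hj : j < L.length), L[j] = {g ⟨j, by omega⟩} := by
    intro j hj
    simp [hL]
  have hex : ∃ B ∈ L, (fun B => decide (g i ∈ B)) B = true := by
    refine ⟨{g i}, ?_, by simp⟩
    simp only [hL, List.mem_map]
    exact ⟨i, List.mem_finRange i, rfl⟩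
  have hlt : List.findIdx (fun B => decide (g i ∈ B)) L < L.length :=
    List.findIdx_lt_length_of_exists hex
  set t := List.findIdx (fun B => decide (g i ∈ B)) L with hT
  have hmem : g i ∈ L[t] := by
    have := List.findIdx_getElem (p := fun B => decide (g i ∈ B)) (xs := L) (w := hlt)
    simpa using this
  rcases Nat.lt_trichotomy t i with h | h | h
  · exfalso
    rw [hgetElem t hlt] at hmem
    have : (i : ℕ) = t := by
      have := hg (Finset.mem_singleton.mp hmem)
      exact congrArg Fin.val this
    omega
  · exact h
  · exfalso
    have hi : (i : ℕ) < t := h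
    have := List.not_of_lt_findIdx (p := fun B => decide (g i ∈ B)) (xs := L)
      (i := (i : ℕ)) (by omega)
    rw [hgetElem i (by omega)] at this
    simp at this

lemma stepOf_seqSched {n : ℕ} (i : Fin n) : stepOf (seqSched n) i = (i : ℕ) := by
  have := findIdx_singleton_map (n := n) (m := n) id (fun _ _ h => h) i
  simpa [stepOf, seqSched] using this

lemma mem_prefUnion_seq {n : ℕ} (s : ℕ) (v : Fin n) :
    v ∈ prefUnion (seqSched n) s ↔ (v : ℕ) < s := by
  unfold prefUnion
  rw [mem_foldr_union]
  constructor
  · rintro ⟨B, hB, hvB⟩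
    rw [List.mem_take_iff_getElem] at hB
    obtain ⟨j, hj, rfl⟩ := hB
    have hj' : j < (seqSched n).length := by
      simp only [seqSched_length] at hj ⊢; omega
    rw [seqSched_getElem n hj'] at hvB
    have := Finset.mem_singleton.mp hvB
    have : (v : ℕ) = j := congrArg Fin.val this
    simp only [seqSched_length] at hj
    omega
  · intro hv
    refine ⟨{v}, ?_, Finset.mem_singleton_self v⟩
    rw [List.mem_take_iff_getElem]
    refine ⟨(v : ℕ), by simp [seqSched_length]; omega, ?_⟩
    rw [seqSched_getElem n (by simp [seqSched_length])]

/-- Unpacking confusability for the sequential schedule. -/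
lemma confusable_seq {n : ℕ} {F : Conf n → Conf n} {x x' : Conf n}
    (h : confusable F (seqSched n) x x') :
    ∃ i ≤ n, ∀ j : Fin n, ((j : ℕ) < i → F x j = F x' j) ∧ ((j : ℕ) ≥ i → x j = x' j) := by
  obtain ⟨i, hi, heq⟩ := h
  rw [seqSched_length] at hi
  refine ⟨i, hi, fun j => ?_⟩
  have := congrFun heq j
  simp only [updSet, mem_prefUnion_seq] at this
  constructor
  · intro hj; rwa [if_pos hj, if_pos hj] at this
  · intro hj; rwa [if_neg (by omega), if_neg (by omega)] at this

/-! ### The clique -/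

/-- Configurations that are `false` on the second half. -/
def zeroPad (n : ℕ) (y : Fin (n / 2) → Bool) : Conf n :=
  fun i => if h : (i : ℕ) < n / 2 then y ⟨i, h⟩ else false

lemma zeroPad_injective (n : ℕ) : Function.Injective (zeroPad n) := by
  intro y y' h
  funext j
  have hj : (j : ℕ) < n := by
    have := j.isLt; omega
  have := congrFun h ⟨(j : ℕ), by omega⟩
  simpa [zeroPad, j.isLt] using this

lemma swapF_involutive {n : ℕ} (hn : Even n) (x : Conf n) :
    swapF n hn (swapF n hn x) = x := by
  have h2 : n % 2 = 0 := Nat.even_iff.mp hn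
  funext i
  by_cases h : (i : ℕ) < n / 2
  · have hlt : ¬ ((i : ℕ) + n / 2 < n / 2) := by omega
    simp only [swapF, dif_pos h, dif_neg hlt]
    congr 1
    exact Fin.ext (by simp only [Fin.val_mk]; omega)
  · have := i.isLt
    have hlt : (i : ℕ) - n / 2 < n / 2 := by omega
    simp only [swapF, dif_neg h, dif_pos hlt]
    congr 1
    exact Fin.ext (by simp only [Fin.val_mk]; omega)

lemma swapF_injective {n : ℕ} (hn : Even n) : Function.Injective (swapF n hn) := by
  intro x x' h
  have := congrArg (swapF n hn) h
  rwa [swapF_involutive, swapF_involutive] at this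

lemma updSet_zeroPad {n : ℕ} (hn : Even n) (y : Fin (n / 2) → Bool) :
    updSet (swapF n hn) (prefUnion (seqSched n) (n / 2)) (zeroPad n y) = fun _ => false := by
  have h2 : n % 2 = 0 := Nat.even_iff.mp hn
  funext j
  simp only [updSet, mem_prefUnion_seq]
  by_cases hj : (j : ℕ) < n / 2
  · rw [if_pos hj]
    have hge : ¬ ((j : ℕ) + n / 2 < n / 2) := by omega
    simp [swapF, hj, zeroPad, hge]
  · rw [if_neg hj]
    simp [zeroPad, hj]

lemma clique_zeroPad {n : ℕ} (hn : Even n) :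
    (gnecc (swapF n hn) (seqSched n)).IsClique
      ((Finset.univ.image (zeroPad n) : Finset (Conf n)) : Set (Conf n)) := by
  intro a ha b hb hab
  simp only [Finset.coe_image, Finset.coe_univ, Set.image_univ, Set.mem_range] at ha hb
  obtain ⟨y, rfl⟩ := ha
  obtain ⟨y', rfl⟩ := hb
  refine ⟨fun h => hab (swapF_injective hn h), n / 2, ?_, ?_⟩
  · rw [seqSched_length]; omega
  · rw [updSet_zeroPad hn, updSet_zeroPad hn]

lemma card_zeroPad (n : ℕ) :
    (Finset.univ.image (zeroPad n) : Finset (Conf n)).card = 2 ^ (n / 2) := by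
  rw [Finset.card_image_of_injective _ (zeroPad_injective n)]
  simp [Fintype.card_fun]

/-! ### Simulation gives a coloring -/

section Coloring

variable {n k : ℕ}

/-- Embed a small configuration into the big network, padding with `false`. -/
noncomputable def embConf (h : Fin n → Fin (n + k)) (x : Conf n) : Conf (n + k) :=
  fun v => if hv : ∃ i, h i = v then x (Classical.choose hv) else false

lemma embConf_h {h : Fin n → Fin (n + k)} (hinj : Function.Injective h) (x : Conf n)
    (i : Fin n) : embConf h x (h i) = x i := by
  have hv : ∃ i', h i' = h i := ⟨i, rfl⟩
  rw [embConf, dif_pos hv]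
  congr 1
  exact hinj (Classical.choose_spec hv)

lemma embConf_notin {h : Fin n → Fin (n + k)} (x : Conf n) {v : Fin (n + k)}
    (hv : v ∉ Set.range h) : embConf h x v = false := by
  rw [embConf, dif_neg]
  intro ⟨i, hi⟩
  exact hv ⟨i, hi⟩

lemma colorable_of_sim (F : Conf n → Conf n)
    (h : Fin n → Fin (n + k)) (hinj : Function.Injective h)
    (W' : List (Finset (Fin (n + k)))) (hW' : isSchedule W')
    (hext : extendsSched (seqSched n) W' h)
    (F' : Conf (n + k) → Conf (n + k)) (hsim : simulates F' W' F h) :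
    (gnecc F (seqSched n)).Colorable (2 ^ k) := by
  classical
  -- strict monotonicity of the update times of image vertices
  have hmono : ∀ i j : Fin n, ((i : ℕ) ≤ (j : ℕ) ↔ stepOf W' (h i) ≤ stepOf W' (h j)) := by
    intro i j
    have := hext i j
    rwa [stepOf_seqSched, stepOf_seqSched] at this
  have hmono' : ∀ i j : Fin n, ((i : ℕ) < (j : ℕ) ↔ stepOf W' (h i) < stepOf W' (h j)) := by
    intro i j
    constructor
    · intro hij
      by_contra hc
      have := (hmono j i).mpr (by omega)
      omega
    · intro hij
      by_contra hc
      have := (hmono j i).mp (by omega)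
      omega
  -- the simulation evaluated at embedded configurations
  have hrun : ∀ x : Conf n, ∀ i : Fin n, runSched F' W' (embConf h x) (h i) = F x i := by
    intro x i
    have := congrFun (hsim (embConf h x)) i
    rw [this]
    congr 1
    funext i'
    exact embConf_h hinj x i'
  -- the coloring
  let C : Conf n → ({v : Fin (n + k) // v ∉ Set.range h} → Bool) :=
    fun x v => runSched F' W' (embConf h x) v.1
  have hvalid : ∀ {x x' : Conf n}, (gnecc F (seqSched n)).Adj x x' → C x ≠ C x' := by
    intro x x' hadj hC
    apply hadj.1
    obtain ⟨i, hi, hvals⟩ := confusable_seq hadj.2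
    -- the threshold step
    set T : ℕ := if hin : i < n then stepOf W' (h ⟨i, hin⟩) else W'.length with hT
    have hT_le : T ≤ W'.length := by
      rw [hT]
      split
      · exact le_of_lt (stepOf_lt_length hW' _)
      · exact le_rfl
    have hlt_T : ∀ j : Fin n, (j : ℕ) < i → stepOf W' (h j) < T := by
      intro j hj
      rw [hT]
      split
      next hin => exact (hmono' j ⟨i, hin⟩).mp hj
      next hin => exact stepOf_lt_length hW' _
    have hge_T : ∀ j : Fin n, i ≤ (j : ℕ) → T ≤ stepOf W' (h j) := by
      intro j hj
      have hin : i < n := lt_of_le_of_lt hj j.isLt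
      rw [hT, dif_pos hin]
      exact (hmono ⟨i, hin⟩ j).mp hj
    -- the partial runs agree at the threshold
    have hkey : pRun F' W' T (embConf h x) = pRun F' W' T (embConf h x') := by
      funext v
      rcases Nat.lt_or_ge (stepOf W' v) T with hvT | hvT
      · -- the value of v is already final
        have hfin : ∀ z, pRun F' W' T z v = runSched F' W' z v := by
          intro z
          exact pRun_frozen F' hvT hT_le
            (fun j hj hgt => not_mem_of_ne_stepOf hW' v hj (by omega)) z
        rw [hfin, hfin]
        by_cases hv : v ∈ Set.range h
        · obtain ⟨j, rfl⟩ := hv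
          have hji : (j : ℕ) < i := by
            by_contra hc
            have := hge_T j (by omega)
            omega
          rw [hrun x j, hrun x' j]
          exact (hvals j).1 hji
        · exact congrFun hC ⟨v, hv⟩
      · -- the value of v is still the initial one
        have hinit : ∀ z : Conf (n + k), pRun F' W' T z v = z v := by
          intro z
          exact pRun_eq_self F'
            (fun j hj hjT => not_mem_of_ne_stepOf hW' v hj (by omega)) z
        rw [hinit, hinit]
        by_cases hv : v ∈ Set.range h
        · obtain ⟨j, rfl⟩ := hv
          have hji : i ≤ (j : ℕ) := by
            by_contra hc
            have := hlt_T j (by omega)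
            omega
          rw [embConf_h hinj x j, embConf_h hinj x' j]
          exact (hvals j).2 hji
        · rw [embConf_notin x hv, embConf_notin x' hv]
    -- hence the full runs agree, so F x = F x'
    have hruns := runSched_eq_of_pRun_eq F' W' hkey
    funext j
    rw [← hrun x j, ← hrun x' j, hruns]
  -- count the colors
  have hcard : Fintype.card ({v : Fin (n + k) // v ∉ Set.range h} → Bool) = 2 ^ k := by
    rw [Fintype.card_fun, Fintype.card_bool]
    congr 1
    have h1 : Fintype.card {v : Fin (n + k) // v ∈ Set.range h} = n := by
      rw [Fintype.card_congr (Equiv.setCongr rfl)]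
      rw [Set.card_range_of_injective hinj, Fintype.card_fin]
    have h2 := Fintype.card_subtype_compl (fun v : Fin (n + k) => v ∈ Set.range h)
    rw [h2, h1, Fintype.card_fin]
    omega
  have hcoloring : (gnecc F (seqSched n)).Coloring
      ({v : Fin (n + k) // v ∉ Set.range h} → Bool) :=
    SimpleGraph.Coloring.mk C (fun hadj => hvalid hadj)
  have := hcoloring.colorable
  rwa [hcard] at this

end Coloring

/-! ### An explicit simulation with `n` extra automata -/

section Construction

variable (n : ℕ)

/-- The block of copy automata, updated first. -/
def bigBlock : Finset (Fin (n + n)) := Finset.univ.filter (fun v => n ≤ (v : ℕ))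

/-- The embedding of the original automata. -/
def embH : Fin n → Fin (n + n) := fun i => ⟨(i : ℕ), by omega⟩

/-- The extended schedule: first copy, then the originals sequentially. -/
def copySched : List (Finset (Fin (n + n))) :=
  bigBlock n :: (List.finRange n).map (fun i => ({embH n i} : Finset (Fin (n + n))))

/-- The extended network: copies read the originals; originals read the copies. -/
def copyF (hn : Even n) : Conf (n + n) → Conf (n + n) := fun z v =>
  if hv : (v : ℕ) < n then
    (if hv2 : (v : ℕ) < n / 2 then
        z ⟨n + ((v : ℕ) + n / 2), by have := Nat.even_iff.mp hn; omega⟩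
      else
        z ⟨n + ((v : ℕ) - n / 2), by omega⟩)
  else z ⟨(v : ℕ) - n, by have := v.isLt; omega⟩

lemma embH_injective : Function.Injective (embH n) := by
  intro i j hij
  have := congrArg Fin.val hij
  exact Fin.ext this

lemma copySched_length : (copySched n).length = n + 1 := by simp [copySched]

lemma copySched_getElem_succ {j : ℕ} (hj : j < n) :
    (copySched n)[j + 1]'(by rw [copySched_length]; omega) = {embH n ⟨j, hj⟩} := by
  simp [copySched]

lemma isSchedule_copySched (hn : 0 < n) : isSchedule (copySched n) := by
  refine ⟨?_, ?_, ?_⟩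
  · intro B hB
    rw [copySched, List.mem_cons] at hB
    rcases hB with rfl | hB
    · exact ⟨⟨n, by omega⟩, by simp [bigBlock]⟩
    · rw [List.mem_map] at hB
      obtain ⟨i, _, rfl⟩ := hB
      exact ⟨embH n i, Finset.mem_singleton_self _⟩
  · rw [copySched, List.pairwise_cons]
    constructor
    · intro B hB
      rw [List.mem_map] at hB
      obtain ⟨i, _, rfl⟩ := hB
      rw [Finset.disjoint_singleton_right]
      simp [bigBlock, embH]
    · rw [List.pairwise_map]
      refine List.Pairwise.imp ?_ (List.pairwise_lt_finRange n)
      intro a b hab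
      rw [Finset.disjoint_singleton_right, Finset.mem_singleton]
      intro hc
      have := congrArg Fin.val hc
      simp only [embH] at this
      omega
  · ext v
    simp only [Finset.mem_univ, iff_true, mem_foldr_union]
    by_cases hv : (v : ℕ) < n
    · refine ⟨{embH n ⟨(v : ℕ), hv⟩}, ?_, ?_⟩
      · rw [copySched, List.mem_cons]
        right
        rw [List.mem_map]
        exact ⟨⟨(v : ℕ), hv⟩, List.mem_finRange _, rfl⟩
      · rw [Finset.mem_singleton]
        exact Fin.ext rfl
    · exact ⟨bigBlock n, List.mem_cons_self, by simp [bigBlock]; omega⟩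

lemma stepOf_copySched (i : Fin n) : stepOf (copySched n) (embH n i) = (i : ℕ) + 1 := by
  rw [stepOf, copySched, List.findIdx_cons]
  rw [show (decide (embH n i ∈ bigBlock n)) = false by simp [bigBlock, embH]]
  simp only [cond_false]
  rw [findIdx_singleton_map (embH n) (embH_injective n) i]

lemma extendsSched_copySched : extendsSched (seqSched n) (copySched n) (embH n) := by
  intro i j
  rw [stepOf_seqSched, stepOf_seqSched, stepOf_copySched, stepOf_copySched]
  omega

lemma notMem_bigBlock_getElem_succ {v : Fin (n + n)} (hv : n ≤ (v : ℕ)) {j : ℕ}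
    (hj : j < (copySched n).length) (hj1 : 1 ≤ j) : v ∉ (copySched n)[j] := by
  rw [copySched_length] at hj
  obtain ⟨j', rfl⟩ : ∃ j', j = j' + 1 := ⟨j - 1, by omega⟩
  rw [copySched_getElem_succ n (by omega)]
  rw [Finset.mem_singleton]
  intro hc
  have := congrArg Fin.val hc
  simp only [embH] at this
  omega

lemma simulates_copyF (hn : Even n) :
    simulates (copyF n hn) (copySched n) (swapF n hn) (embH n) := by
  have h2 : n % 2 = 0 := Nat.even_iff.mp hn
  intro z
  funext i
  show runSched (copyF n hn) (copySched n) z (embH n i) = _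
  -- the final value of automaton `embH n i`
  have hmem : embH n i ∈ (copySched n)[(i : ℕ) + 1]'(by rw [copySched_length]; omega) := by
    rw [copySched_getElem_succ n i.isLt, Finset.mem_singleton]
  have hafter : ∀ j (hj : j < (copySched n).length), (i : ℕ) + 1 < j →
      embH n i ∉ (copySched n)[j] := by
    intro j hj hgt
    rw [copySched_length] at hj
    obtain ⟨j', rfl⟩ : ∃ j', j = j' + 1 := ⟨j - 1, by omega⟩
    rw [copySched_getElem_succ n (by omega), Finset.mem_singleton]
    intro hc
    have := congrArg Fin.val hc
    simp [embH] at this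
    omega
  rw [runSched_at (copyF n hn) (by rw [copySched_length]; omega) hmem hafter z]
  -- unfold one step of `copyF` at an original automaton
  have hvlt : ((embH n i : Fin (n + n)) : ℕ) < n := i.isLt
  rw [copyF]
  simp only [hvlt, dif_pos]
  -- the copy automaton read has kept its value from step 1
  have hread : ∀ (u : Fin (n + n)), n ≤ (u : ℕ) →
      pRun (copyF n hn) (copySched n) ((i : ℕ) + 1) z u = z ⟨(u : ℕ) - n, by have := u.isLt; omega⟩ := by
    intro u hu
    have hstable := pRun_stable (copyF n hn) (W := copySched n) (v := u)
      (a := 1) (b := (copySched n).length)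
      (fun j hj h1j _ => notMem_bigBlock_getElem_succ n hu hj h1j)
      ((i : ℕ) + 1) (by omega) (by rw [copySched_length]; omega) z
    rw [hstable]
    have h0 : (0 : ℕ) < (copySched n).length := by rw [copySched_length]; omega
    have hx := congrFun (pRun_succ_of_lt (copyF n hn) h0 z) u
    rw [pRun_zero] at hx
    simp only [Nat.zero_add] at hx
    rw [hx]
    have hmem0 : u ∈ (copySched n)[0] := by
      simp [copySched, bigBlock]; omega
    show (if u ∈ (copySched n)[0] then _ else _) = _
    rw [if_pos hmem0]
    rw [copyF]
    simp only [Nat.not_lt_of_le hu, dif_neg, not_lt]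
    rfl
  by_cases hi : (i : ℕ) < n / 2
  · rw [dif_pos (show ((embH n i : Fin (n + n)) : ℕ) < n / 2 by simpa [embH] using hi)]
    rw [hread _ (by simp [embH])]
    rw [swapF]
    simp only [hi, dif_pos]
    congr 1
    exact Fin.ext (by simp [embH])
  · rw [dif_neg (show ¬ ((embH n i : Fin (n + n)) : ℕ) < n / 2 by simpa [embH] using hi)]
    rw [hread _ (by simp [embH])]
    rw [swapF]
    simp only [hi, dif_neg]
    congr 1
    exact Fin.ext (by simp [embH])

end Construction

/-! ### Main theorem -/

theorem stmt4 {n : ℕ} (hn : Even n) :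
    ((2 ^ (n / 2) : ℕ) : ℕ∞) ≤ (gnecc (swapF n hn) (seqSched n)).chromaticNumber ∧
    n / 2 ≤ kappa (swapF n hn) (seqSched n) := by
  have hclique := clique_zeroPad hn
  constructor
  · have := hclique.card_le_chromaticNumber
    rwa [card_zeroPad n] at this
  · by_cases hn0 : n / 2 = 0
    · simp [hn0]
    · have hpos : 0 < n := by omega
      rw [kappa]
      apply le_csInf
      · exact ⟨n, embH n, embH_injective n, copySched n, isSchedule_copySched n hpos,
          extendsSched_copySched n, copyF n hn, simulates_copyF n hn⟩
      · rintro K ⟨h, hinj, W', hW', hext, F', hsim⟩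
        have hcol := colorable_of_sim (swapF n hn) h hinj W' hW' hext F' hsim
        have hle : 2 ^ (n / 2) ≤ 2 ^ K := by
          have := hclique.card_le_of_colorable hcol
          rwa [card_zeroPad n] at this
        exact (Nat.pow_le_pow_iff_right (by norm_num)).mp hle
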